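/- Let g₁, g₂ ∈ A be nontrivial elements with ⟨g₁⟩ ∩ ⟨g₂⟩ = {1}. Then ⟨g₁⟩ is separable from g₂ in G: there exists a finite-index normal subgroup Ḡ of G with g₂ ∉ ⟨g₁⟩·Ḡ. -/

import Mathlib

open Subgroup Pointwise Matrix

/-- The free abelian group of rank `n`, written multiplicatively. -/
abbrev FreeAb (n : ℕ) : Type := Multiplicative (Fin n → ℤ)

/-- The isomorphism from `A = ⊤` onto the image `φ(A)` induced by an injective
endomorphism `φ` of the free abelian group `A`. -/
noncomputable def ascIso {n : ℕ} (φ : FreeAb n →* FreeAb n) (hφ : Function.Injective φ) :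
    (⊤ : Subgroup (FreeAb n)) ≃* φ.range :=
  Subgroup.topEquiv.trans (MonoidHom.ofInjective hφ)

/-- The ascending HNN extension `G = A∗_φ = ⟨A, t ∣ t·a·t⁻¹ = φ(a) for a ∈ A⟩`,
realized as the HNN extension of `A` over the subgroups `⊤` and `φ.range`. -/
abbrev AscHNN {n : ℕ} (φ : FreeAb n →* FreeAb n) (hφ : Function.Injective φ) : Type :=
  HNNExtension (FreeAb n) ⊤ φ.range (ascIso φ hφ)

/-- Let `g₁, g₂ ∈ A` be nontrivial with `⟨g₁⟩ ∩ ⟨g₂⟩ = {1}`.  Then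
`⟨g₁⟩` is separable from `g₂` in `G = A∗_φ`: there is a finite-index normal subgroup
`Gbar` of `G` with `g₂ ∉ ⟨g₁⟩·Gbar`. -/
theorem stmt_8 (n : ℕ) (hn : 1 ≤ n)
    (φ : FreeAb n →* FreeAb n) (hφ : Function.Injective φ)
    (g₁ g₂ : FreeAb n) (hg₁ : g₁ ≠ 1) (hg₂ : g₂ ≠ 1)
    (hdisj : Subgroup.zpowers g₁ ⊓ Subgroup.zpowers g₂ = ⊥) :
    ∃ Gbar : Subgroup (AscHNN φ hφ), Gbar.Normal ∧ Gbar.FiniteIndex ∧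
      (HNNExtension.of g₂ : AscHNN φ hφ) ∉
        ((Subgroup.zpowers (HNNExtension.of g₁ : AscHNN φ hφ) : Set (AscHNN φ hφ)) *
          (Gbar : Set (AscHNN φ hφ))) := by
  classical
  set a₁ : Fin n → ℤ := Multiplicative.toAdd g₁ with ha₁
  set a₂ : Fin n → ℤ := Multiplicative.toAdd g₂ with ha₂
  -- Step 1: `a₁` and `a₂` are not proportional.
  have key : ∃ i j, a₁ i * a₂ j ≠ a₁ j * a₂ i := by
    by_contra h
    push_neg at h
    have ha₁ne : a₁ ≠ 0 := by
      intro h0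
      apply hg₁
      have : Multiplicative.ofAdd a₁ = Multiplicative.ofAdd 0 := by rw [h0]
      simpa [ha₁] using this
    obtain ⟨i₀, hi₀⟩ := Function.ne_iff.1 ha₁ne
    have hsmul : a₁ i₀ • a₂ = a₂ i₀ • a₁ := by
      funext j
      simpa [smul_eq_mul, mul_comm] using h i₀ j
    have hpow : g₂ ^ (a₁ i₀) = g₁ ^ (a₂ i₀) := by
      apply Multiplicative.toAdd.injective
      simpa [toAdd_zpow, ← ha₁, ← ha₂] using hsmul
    have hmem : g₂ ^ (a₁ i₀) ∈ Subgroup.zpowers g₁ ⊓ Subgroup.zpowers g₂ :=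
      ⟨⟨a₂ i₀, hpow.symm⟩, ⟨a₁ i₀, rfl⟩⟩
    rw [hdisj, Subgroup.mem_bot] at hmem
    have : a₁ i₀ • a₂ = 0 := by
      have := congrArg Multiplicative.toAdd hmem
      simpa [toAdd_zpow] using this
    rcases smul_eq_zero.1 this with h1 | h2
    · exact hi₀ (by simpa using h1)
    · apply hg₂
      have : Multiplicative.ofAdd a₂ = Multiplicative.ofAdd 0 := by rw [h2]
      simpa [ha₂] using this
  obtain ⟨i, j, hij⟩ := key
  set c : ℤ := a₁ i * a₂ j - a₁ j * a₂ i with hc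
  have hcne : c ≠ 0 := sub_ne_zero.2 hij
  -- Step 2: the matrix of `φ` and its determinant.
  set L : (Fin n → ℤ) →ₗ[ℤ] (Fin n → ℤ) := (MonoidHom.toAdditive φ).toIntLinearMap with hL
  have hLφ : ∀ x, L x = Multiplicative.toAdd (φ (Multiplicative.ofAdd x)) := fun _ => rfl
  have hLinj : Function.Injective L := by
    intro x y hxy
    have : φ (Multiplicative.ofAdd x) = φ (Multiplicative.ofAdd y) := by
      apply Multiplicative.toAdd.injective
      rw [← hLφ, ← hLφ, hxy]
    simpa using hφ this
  set M : Matrix (Fin n) (Fin n) ℤ := LinearMap.toMatrix' L with hM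
  have hML : ∀ x, L x = M *ᵥ x := by
    intro x
    rw [← Matrix.toLin'_apply, hM, Matrix.toLin'_toMatrix']
  have hd : M.det ≠ 0 := by
    intro h0
    obtain ⟨v, hv, hMv⟩ := Matrix.exists_mulVec_eq_zero_iff.2 h0
    apply hv
    apply hLinj
    rw [hML, hMv]
    simp
  -- Step 3: choose a suitable prime.
  obtain ⟨p, hple, hp⟩ := Nat.exists_infinite_primes ((M.det * c).natAbs + 1)
  haveI : Fact p.Prime := ⟨hp⟩
  haveI : NeZero p := ⟨hp.pos.ne'⟩
  have hdc : M.det * c ≠ 0 := mul_ne_zero hd hcne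
  have hpdvd : ¬ ((p : ℤ) ∣ M.det * c) := by
    intro hdvd
    have h1 : p ∣ (M.det * c).natAbs := Int.natAbs_dvd_natAbs.2 (by simpa using hdvd)
    have h2 : p ≤ (M.det * c).natAbs :=
      Nat.le_of_dvd (Int.natAbs_pos.2 hdc) h1
    omega
  have hdcp : ((M.det * c : ℤ) : ZMod p) ≠ 0 := by
    rw [Ne, ZMod.intCast_zmod_eq_zero_iff_dvd]
    exact hpdvd
  have hdp : ((M.det : ℤ) : ZMod p) ≠ 0 := by
    intro h0; apply hdcp; rw [Int.cast_mul, h0, zero_mul]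
  have hcp : ((c : ℤ) : ZMod p) ≠ 0 := by
    intro h0; apply hdcp; push_cast; rw [h0, mul_zero]
  -- Step 4: the reduction of `M` mod `p` and the associated permutation.
  set Mp : Matrix (Fin n) (Fin n) (ZMod p) := M.map (Int.cast : ℤ → ZMod p) with hMp
  have hMpdet : Mp.det ≠ 0 := by
    rw [hMp, show M.map (Int.cast : ℤ → ZMod p) = (Int.castRingHom (ZMod p)).mapMatrix M from rfl,
      ← RingHom.map_det]
    exact hdp
  have hMpunit : IsUnit Mp := (Matrix.isUnit_iff_isUnit_det Mp).2 (isUnit_iff_ne_zero.2 hMpdet)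
  have hMpinj : Function.Injective Mp.mulVec := Matrix.mulVec_injective_iff_isUnit.2 hMpunit
  have hMpbij : Function.Bijective Mp.mulVec := Finite.injective_iff_bijective.1 hMpinj
  set e : Equiv.Perm (Fin n → ZMod p) := Equiv.ofBijective _ hMpbij with he
  -- the reduction map
  set π : (Fin n → ℤ) → (Fin n → ZMod p) := fun x l => ((x l : ℤ) : ZMod p) with hπf
  have hπadd : ∀ x y, π (x + y) = π x + π y := by
    intro x y; funext l; simp [hπf]
  have hcomm : ∀ x, π (M *ᵥ x) = Mp *ᵥ π x := by
    intro x
    funext l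
    simp only [hπf, hMp, Matrix.mulVec, dotProduct, Matrix.map_apply]
    push_cast
    rfl
  -- Step 5: the homomorphism to a finite group.
  set base : FreeAb n →* Equiv.Perm (Fin n → ZMod p) :=
    { toFun := fun g => Equiv.addLeft (π (Multiplicative.toAdd g))
      map_one' := by
        show Equiv.addLeft (π (Multiplicative.toAdd (1 : FreeAb n))) = 1
        have : π (Multiplicative.toAdd (1 : FreeAb n)) = 0 := by funext l; simp [hπf]
        rw [this, Equiv.addLeft_zero]
      map_mul' := by
        intro g h
        show Equiv.addLeft (π (Multiplicative.toAdd (g * h))) =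
          Equiv.addLeft (π (Multiplicative.toAdd g)) * Equiv.addLeft (π (Multiplicative.toAdd h))
        have : π (Multiplicative.toAdd (g * h)) =
            π (Multiplicative.toAdd g) + π (Multiplicative.toAdd h) := by
          funext l; simp [hπf]
        rw [this, Equiv.addLeft_add] } with hbase
  have hlift : ∀ a : ((⊤ : Subgroup (FreeAb n))),
      e * base ↑a = base ((ascIso φ hφ a : φ.range) : FreeAb n) * e := by
    intro a
    have hval : ((ascIso φ hφ a : φ.range) : FreeAb n) = φ ↑a := rfl
    rw [hval]
    ext x
    have h1 : (e * base ↑a) x = Mp *ᵥ (π (Multiplicative.toAdd (a : FreeAb n)) + x) := by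
      simp [hbase, he, Equiv.ofBijective_apply]
    have h2 : (base (φ ↑a) * e) x =
        π (Multiplicative.toAdd (φ (a : FreeAb n))) + Mp *ᵥ x := by
      simp [hbase, he, Equiv.ofBijective_apply]
    rw [h1, h2, Matrix.mulVec_add]
    congr 1
    have : Multiplicative.toAdd (φ (a : FreeAb n)) = M *ᵥ (Multiplicative.toAdd (a : FreeAb n)) := by
      rw [← hML, hLφ]
      simp
    rw [this, hcomm]
  set Ψ : AscHNN φ hφ →* Equiv.Perm (Fin n → ZMod p) :=
    HNNExtension.lift base e hlift with hΨ
  refine ⟨Ψ.ker, MonoidHom.normal_ker Ψ, inferInstance, ?_⟩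
  intro hmem
  rw [Set.mem_mul] at hmem
  obtain ⟨x, hxmem, y, hymem, hxy⟩ := hmem
  rw [SetLike.mem_coe, Subgroup.mem_zpowers_iff] at hxmem
  obtain ⟨k, rfl⟩ := hxmem
  have hyker : Ψ y = 1 := by
    rw [SetLike.mem_coe, MonoidHom.mem_ker] at hymem
    exact hymem
  have hΨeq : base g₂ = base (g₁ ^ k) := by
    have h := congrArg Ψ hxy
    rw [_root_.map_mul, _root_.map_zpow, hyker, mul_one, hΨ, HNNExtension.lift_of,
      HNNExtension.lift_of] at h
    exact h.symm.trans (_root_.map_zpow base g₁ k).symm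
  have hπeq : π a₂ = π (k • a₁) := by
    have := congrArg (fun (σ : Equiv.Perm (Fin n → ZMod p)) => σ 0) hΨeq
    simpa [hbase, toAdd_zpow, ← ha₁, ← ha₂] using this
  have hcomp : ∀ l, ((a₂ l : ℤ) : ZMod p) = (k : ZMod p) * ((a₁ l : ℤ) : ZMod p) := by
    intro l
    have := congrFun hπeq l
    simpa [hπf, push_cast] using this
  apply hcp
  have : ((c : ℤ) : ZMod p) =
      ((a₁ i : ℤ) : ZMod p) * ((a₂ j : ℤ) : ZMod p)
        - ((a₁ j : ℤ) : ZMod p) * ((a₂ i : ℤ) : ZMod p) := by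
    rw [hc]; push_cast; ring
  rw [this, hcomp i, hcomp j]
  ring
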